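/- Let X_1,…,X_p be i.i.d. Beta(1/2,(n-1)/2) random variables with n ≥ 2 fixed, and fix δ with 0 < δ < 1/2. Then P( max_j X_j < (1-δ)(1 - p^{-2/(n-1)}) ) ≤ exp( -p · P(X_1 > (1-δ)(1-p^{-2/(n-1)})) ), and p · P(X_1 > (1-δ)(1-p^{-2/(n-1)})) → ∞ as p → ∞; hence P( max_j X_j < (1-δ)(1-p^{-2/(n-1)}) ) → 0. -/

import Mathlib

open MeasureTheory ProbabilityTheory Real Set Filter

/-- The real Beta function. -/
noncomputable def betaFun (a b : ℝ) : ℝ := Real.Gamma a * Real.Gamma b / Real.Gamma (a + b)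

/-- The Beta(a,b) distribution on ℝ. -/
noncomputable def betaMeasure (a b : ℝ) : Measure ℝ :=
  ((volume : Measure ℝ).restrict (Set.Ioo 0 1)).withDensity
    fun x => ENNReal.ofReal (x ^ (a - 1) * (1 - x) ^ (b - 1) / betaFun a b)

open intervalIntegral in

lemma complex_eq (a b : ℝ) {x : ℝ} (hx : x ∈ Set.Icc (0:ℝ) 1) :
    (x:ℂ) ^ ((a:ℂ) - 1) * (1 - (x:ℂ)) ^ ((b:ℂ) - 1)
      = ((x ^ (a-1) * (1-x) ^ (b-1) : ℝ) : ℂ) := by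
  obtain ⟨h0, h1⟩ := hx
  rw [Complex.ofReal_mul, Complex.ofReal_cpow h0, Complex.ofReal_cpow (by linarith : (0:ℝ) ≤ 1 - x)]
  push_cast
  ring

lemma beta_intervalIntegrable {a b : ℝ} (ha : 0 < a) (hb : 0 < b) :
    IntervalIntegrable (fun x : ℝ => x ^ (a-1) * (1-x) ^ (b-1)) volume 0 1 := by
  have hc := Complex.betaIntegral_convergent (u := a) (v := b) (by simpa) (by simpa)
  rw [intervalIntegrable_iff_integrableOn_Ioc_of_le (by norm_num)] at hc ⊢
  refine MeasureTheory.IntegrableOn.congr_fun hc.re (fun x hx => ?_) measurableSet_Ioc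
  rw [complex_eq a b (Ioc_subset_Icc_self hx)]
  simp

lemma beta_integral_eq {a b : ℝ} (ha : 0 < a) (hb : 0 < b) :
    ∫ x in (0:ℝ)..1, x ^ (a-1) * (1-x) ^ (b-1) = betaFun a b := by
  have key : Complex.betaIntegral a b = ((betaFun a b : ℝ) : ℂ) := by
    have h := Complex.Gamma_mul_Gamma_eq_betaIntegral (s := a) (t := b) (by simpa) (by simpa)
    have hab : Real.Gamma (a + b) ≠ 0 := (Real.Gamma_pos_of_pos (by linarith)).ne'
    rw [show ((a:ℂ) + b) = ((a + b : ℝ) : ℂ) by push_cast; ring] at h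
    rw [Complex.Gamma_ofReal, Complex.Gamma_ofReal, Complex.Gamma_ofReal] at h
    rw [betaFun]
    push_cast
    rw [eq_div_iff (by exact_mod_cast hab), mul_comm, ← h]
  have h2 : Complex.betaIntegral a b = ((∫ x in (0:ℝ)..1, x ^ (a-1) * (1-x) ^ (b-1) : ℝ) : ℂ) := by
    rw [Complex.betaIntegral, ← intervalIntegral.integral_ofReal]
    refine intervalIntegral.integral_congr (fun x hx => ?_)
    rw [uIcc_of_le (by norm_num : (0:ℝ) ≤ 1)] at hx
    exact (complex_eq a b hx)
  rw [key] at h2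
  exact_mod_cast h2.symm

lemma betaFun_pos {a b : ℝ} (ha : 0 < a) (hb : 0 < b) : 0 < betaFun a b :=
  div_pos (mul_pos (Real.Gamma_pos_of_pos ha) (Real.Gamma_pos_of_pos hb))
    (Real.Gamma_pos_of_pos (by linarith))

lemma beta_dens_meas (a b : ℝ) :
    Measurable fun x : ℝ => ENNReal.ofReal (x ^ (a - 1) * (1 - x) ^ (b - 1) / betaFun a b) := by
  apply ENNReal.measurable_ofReal.comp
  apply Measurable.div_const
  have h1 : Measurable fun x : ℝ => x ^ (a - 1) :=
    measurable_of_continuousOn_compl_singleton 0 fun x hx =>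
      (Real.continuousAt_rpow_const x _ (Or.inl hx)).continuousWithinAt
  have h2 : Measurable fun x : ℝ => (1 - x) ^ (b - 1) := by
    have : Measurable fun y : ℝ => y ^ (b - 1) :=
      measurable_of_continuousOn_compl_singleton 0 fun y hy =>
        (Real.continuousAt_rpow_const y _ (Or.inl hy)).continuousWithinAt
    exact this.comp (measurable_const.sub measurable_id)
  exact h1.mul h2

lemma betaMeasure_integrableOn {a b : ℝ} (ha : 0 < a) (hb : 0 < b) :
    IntegrableOn (fun x : ℝ => x ^ (a-1) * (1-x) ^ (b-1) / betaFun a b) (Set.Ioo 0 1) volume := by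
  have h := (beta_intervalIntegrable ha hb)
  rw [intervalIntegrable_iff_integrableOn_Ioc_of_le (by norm_num)] at h
  exact (h.mono_set Ioo_subset_Ioc_self).div_const _

lemma betaMeasure_isProb {a b : ℝ} (ha : 0 < a) (hb : 0 < b) :
    IsProbabilityMeasure (_root_.betaMeasure a b) := by
  constructor
  rw [_root_.betaMeasure, withDensity_apply _ MeasurableSet.univ, Measure.restrict_univ]
  rw [← ofReal_integral_eq_lintegral_ofReal (betaMeasure_integrableOn ha hb)]
  · rw [MeasureTheory.integral_div, ← MeasureTheory.integral_Ioc_eq_integral_Ioo,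
      ← intervalIntegral.integral_of_le (by norm_num : (0:ℝ) ≤ 1), beta_integral_eq ha hb,
      div_self (betaFun_pos ha hb).ne']
    simp
  · filter_upwards [ae_restrict_mem measurableSet_Ioo] with x hx
    have h1 : (0:ℝ) < x := hx.1
    have h2 : (0:ℝ) < 1 - x := by linarith [hx.2]
    have hB := betaFun_pos ha hb
    positivity

lemma betaMeasure_Ioi_pos {a b : ℝ} (ha : 0 < a) (hb : 0 < b) {t : ℝ} (ht0 : 0 ≤ t)
    (ht1 : t < 1) : 0 < _root_.betaMeasure a b (Set.Ioi t) := by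
  rw [_root_.betaMeasure, withDensity_apply _ measurableSet_Ioi,
    Measure.restrict_restrict measurableSet_Ioi]
  have hI : Set.Ioi t ∩ Set.Ioo 0 1 = Set.Ioo t 1 := by
    ext x
    constructor
    · rintro ⟨h1, _, h3⟩; exact ⟨h1, h3⟩
    · rintro ⟨h1, h2⟩; exact ⟨h1, lt_of_le_of_lt ht0 h1, h2⟩
  rw [hI, lintegral_pos_iff_support (beta_dens_meas a b)]
  have hsub : Set.Ioo t 1 ⊆ Function.support
      fun x : ℝ => ENNReal.ofReal (x ^ (a - 1) * (1 - x) ^ (b - 1) / betaFun a b) := by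
    intro x hx
    have h1 : (0:ℝ) < x := lt_of_le_of_lt ht0 hx.1
    have h2 : (0:ℝ) < 1 - x := by linarith [hx.2]
    have hB := betaFun_pos ha hb
    simp only [Function.mem_support, ne_eq, ENNReal.ofReal_eq_zero, not_le]
    positivity
  calc (0:ENNReal) < ENNReal.ofReal (1 - t) := by simp [ht1]
    _ = (volume.restrict (Set.Ioo t 1)) (Set.Ioo t 1) := by
        rw [Measure.restrict_apply_self, Real.volume_Ioo]
    _ ≤ _ := measure_mono hsub


theorem beta_max_lower_tail_aux (n : ℕ) (hn : 2 ≤ n) (δ : ℝ) (hδ0 : 0 < δ) (hδ1 : δ < 1/2)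
    (μ : Measure ℝ) (hprob : IsProbabilityMeasure μ)
    (hpos : 0 < μ (Set.Ioi (1 - δ))) :
    (∀ p : ℕ,
        ((Measure.pi fun _ : Fin p => μ)
            {y | (⨆ j, y j) < (1 - δ) * (1 - (p:ℝ) ^ (-2/((n:ℝ) - 1)))}).toReal
          ≤ Real.exp (-(p:ℝ) *
              ((μ) {x | (1 - δ) * (1 - (p:ℝ) ^ (-2/((n:ℝ) - 1))) < x}).toReal)) ∧
    Tendsto (fun p : ℕ => (p:ℝ) *
        ((μ) {x | (1 - δ) * (1 - (p:ℝ) ^ (-2/((n:ℝ) - 1))) < x}).toReal) atTop atTop ∧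
    Tendsto (fun p : ℕ =>
        ((Measure.pi fun _ : Fin p => μ)
          {y | (⨆ j, y j) < (1 - δ) * (1 - (p:ℝ) ^ (-2/((n:ℝ) - 1)))}).toReal)
      atTop (nhds 0) := by
  haveI := hprob
  have hn1 : (1:ℝ) ≤ (n:ℝ) - 1 := by
    have : (2:ℝ) ≤ (n:ℝ) := by exact_mod_cast hn
    linarith
  set c : ℝ := -2/((n:ℝ) - 1) with hc
  set t : ℕ → ℝ := fun p => (1 - δ) * (1 - (p:ℝ) ^ c) with ht
  -- t p ≤ 1 - δ
  have htle : ∀ p : ℕ, t p ≤ 1 - δ := by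
    intro p
    have h1 : (0:ℝ) ≤ (p:ℝ) ^ c := Real.rpow_nonneg (Nat.cast_nonneg p) c
    have h2 : (0:ℝ) < 1 - δ := by linarith
    have h3 : t p = (1 - δ) * (1 - (p:ℝ) ^ c) := rfl
    rw [h3]; nlinarith
  -- sets
  have hset : ∀ p : ℕ, 0 < p →
      {y : Fin p → ℝ | (⨆ j, y j) < t p} = Set.pi univ (fun _ => Iio (t p)) := by
    intro p hp
    haveI : Nonempty (Fin p) := Fin.pos_iff_nonempty.mp hp
    ext y
    simp only [mem_setOf_eq, Set.mem_pi, mem_univ, mem_Iio, true_implies]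
    constructor
    · intro h j
      exact lt_of_le_of_lt (le_ciSup (Set.Finite.bddAbove (finite_range y)) j) h
    · intro h
      obtain ⟨j, hj⟩ := Finite.exists_max y
      exact lt_of_le_of_lt (ciSup_le hj) (h j)
  -- Part 1
  have part1 : ∀ p : ℕ,
      ((Measure.pi fun _ : Fin p => μ) {y | (⨆ j, y j) < t p}).toReal
        ≤ Real.exp (-(p:ℝ) * (μ {x | t p < x}).toReal) := by
    intro p
    rcases Nat.eq_zero_or_pos p with hp | hp
    · subst hp
      have h0 : t 0 = 1 - δ := by
        show (1 - δ) * (1 - ((0:ℕ):ℝ) ^ c) = 1 - δ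
        rw [Nat.cast_zero, Real.zero_rpow (by rw [hc]; positivity)]
        ring
      have huniv : {y : Fin 0 → ℝ | (⨆ j, y j) < t 0} = univ := by
        ext y
        simp only [mem_setOf_eq, mem_univ, iff_true]
        rw [Real.iSup_of_isEmpty]
        rw [h0]; linarith
      rw [huniv]
      haveI : IsProbabilityMeasure (Measure.pi fun _ : Fin 0 => μ) := inferInstance
      rw [measure_univ]
      simp
    · rw [hset p hp, Measure.pi_pi]
      rw [Finset.prod_const, Finset.card_univ, Fintype.card_fin, ENNReal.toReal_pow]
      set q := (μ (Iio (t p))).toReal with hq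
      set s := (μ (Ioi (t p))).toReal with hs
      have hdisj : Disjoint (Iio (t p)) (Ioi (t p)) :=
        (Iio_disjoint_Ici le_rfl).mono_right Ioi_subset_Ici_self
      have hqs : q + s ≤ 1 := by
        have hU : μ (Iio (t p) ∪ Ioi (t p)) = μ (Iio (t p)) + μ (Ioi (t p)) :=
          measure_union hdisj measurableSet_Ioi
        have hle : μ (Iio (t p) ∪ Ioi (t p)) ≤ 1 := by
          rw [← measure_univ (μ := μ)]; exact measure_mono (subset_univ _)
        rw [hU] at hle
        have h1 := ENNReal.toReal_mono (by simp) hle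
        rw [ENNReal.toReal_add (measure_ne_top μ _) (measure_ne_top μ _)] at h1
        simpa using h1
      have hq0 : 0 ≤ q := ENNReal.toReal_nonneg
      have hs0 : 0 ≤ s := ENNReal.toReal_nonneg
      have hqe : q ≤ Real.exp (-s) := by
        have := Real.add_one_le_exp (-s); linarith
      calc q ^ p ≤ (Real.exp (-s)) ^ p := pow_le_pow_left₀ hq0 hqe p
        _ = Real.exp (-(p:ℝ) * s) := by
            rw [← Real.exp_nat_mul]; ring_nf
  -- Part 2
  have hst : ∀ p : ℕ, (μ (Ioi (1 - δ))).toReal ≤ (μ {x | t p < x}).toReal := by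
    intro p
    exact ENNReal.toReal_mono (measure_ne_top μ _)
      (measure_mono fun x hx => lt_of_le_of_lt (htle p) hx)
  have hε : 0 < (μ (Ioi (1 - δ))).toReal :=
    ENNReal.toReal_pos hpos.ne' (measure_ne_top μ _)
  have part2 : Tendsto (fun p : ℕ => (p:ℝ) * (μ {x | t p < x}).toReal) atTop atTop := by
    apply tendsto_atTop_mono
      (f := fun p : ℕ => (p:ℝ) * (μ (Ioi (1 - δ))).toReal)
    · intro p
      exact mul_le_mul_of_nonneg_left (hst p) (Nat.cast_nonneg p)
    · exact (tendsto_natCast_atTop_atTop).atTop_mul_const hε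
  refine ⟨part1, part2, ?_⟩
  have hcomp : Tendsto (fun p : ℕ => Real.exp (-(p:ℝ) * (μ {x | t p < x}).toReal))
      atTop (nhds 0) := by
    have h := Real.tendsto_exp_neg_atTop_nhds_zero.comp part2
    refine h.congr fun p => ?_
    simp only [Function.comp_apply]
    rw [neg_mul]
  exact squeeze_zero (fun p => ENNReal.toReal_nonneg) part1 hcomp

theorem beta_max_lower_tail (n : ℕ) (hn : 2 ≤ n) (δ : ℝ) (hδ0 : 0 < δ) (hδ1 : δ < 1/2) :
    (∀ p : ℕ,
        ((Measure.pi fun _ : Fin p => _root_.betaMeasure (1/2) (((n:ℝ) - 1)/2))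
            {y | (⨆ j, y j) < (1 - δ) * (1 - (p:ℝ) ^ (-2/((n:ℝ) - 1)))}).toReal
          ≤ Real.exp (-(p:ℝ) *
              ((_root_.betaMeasure (1/2) (((n:ℝ) - 1)/2))
                {x | (1 - δ) * (1 - (p:ℝ) ^ (-2/((n:ℝ) - 1))) < x}).toReal)) ∧
    Tendsto (fun p : ℕ => (p:ℝ) *
        ((_root_.betaMeasure (1/2) (((n:ℝ) - 1)/2))
          {x | (1 - δ) * (1 - (p:ℝ) ^ (-2/((n:ℝ) - 1))) < x}).toReal) atTop atTop ∧
    Tendsto (fun p : ℕ =>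
        ((Measure.pi fun _ : Fin p => _root_.betaMeasure (1/2) (((n:ℝ) - 1)/2))
          {y | (⨆ j, y j) < (1 - δ) * (1 - (p:ℝ) ^ (-2/((n:ℝ) - 1)))}).toReal)
      atTop (nhds 0) := by
  have hb : (0:ℝ) < ((n:ℝ) - 1)/2 := by
    have : (2:ℝ) ≤ (n:ℝ) := by exact_mod_cast hn
    linarith
  have ha : (0:ℝ) < (1:ℝ)/2 := by norm_num
  exact beta_max_lower_tail_aux n hn δ hδ0 hδ1 _ (betaMeasure_isProb ha hb)
    (betaMeasure_Ioi_pos ha hb (by linarith) (by linarith))
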